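/- Let b be a natural number, let v : Fin (3b+1) → ℝ, and let H ⊆ Fin (3b+1) with |H| ≥ 2b+1. Sort the 3b+1 values of v in nondecreasing order and discard the smallest b values and the largest b values. Then every one of the remaining b+1 values lies in the closed interval [min_{i ∈ H} v i, max_{i ∈ H} v i]; that is, in the sorted list w(0) ≤ w(1) ≤ … ≤ w(3b), for every index k with b ≤ k ≤ 2b one has min_{i ∈ H} v i ≤ w(k) ≤ max_{i ∈ H} v i. -/
import Mathlib

theorem sorted_middle_values_mem_Icc_honest (b : ℕ) (v : Fin (3 * b + 1) → ℝ)
    (H : Finset (Fin (3 * b + 1))) (hH : 2 * b + 1 ≤ H.card) :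
    ∀ k : Fin (3 * b + 1), b ≤ k.val → k.val ≤ 2 * b →
      (v ∘ Tuple.sort v) k ∈
        Set.Icc (H.inf' (Finset.card_pos.mp (by omega)) v)
          (H.sup' (Finset.card_pos.mp (by omega)) v) := by
  intro k hk1 hk2
  set σ := Tuple.sort v
  have hmono : Monotone (v ∘ σ) := Tuple.monotone_sort v
  have hne : H.Nonempty := Finset.card_pos.mp (by omega)
  set m := H.inf' hne v
  set M := H.sup' hne v
  constructor
  · by_contra h
    push_neg at h
    -- all indices j ≤ k map to values < m
    have hsub : (Finset.Iic k).image σ ⊆ Finset.univ.filter (fun i => v i < m) := by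
      intro i hi
      simp only [Finset.mem_image, Finset.mem_Iic] at hi
      obtain ⟨j, hj, rfl⟩ := hi
      have : (v ∘ σ) j ≤ (v ∘ σ) k := hmono hj
      simp only [Finset.mem_filter, Finset.mem_univ, true_and]
      exact lt_of_le_of_lt this h
    have hdisj : Finset.univ.filter (fun i => v i < m) ∩ H = ∅ := by
      ext i
      simp only [Finset.mem_inter, Finset.mem_filter, Finset.mem_univ, true_and,
        Finset.notMem_empty, iff_false]
      rintro ⟨hlt, hiH⟩
      exact absurd (Finset.inf'_le v hiH) (not_le.mpr hlt)
    have hcard1 : (Finset.univ.filter (fun i => v i < m)).card ≤ b := by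
      have := Finset.card_union_le (Finset.univ.filter (fun i => v i < m)) H
      have hle : (Finset.univ.filter (fun i => v i < m)).card + H.card ≤ 3 * b + 1 := by
        have := Finset.card_union_add_card_inter
          (Finset.univ.filter (fun i => v i < m)) H
        rw [hdisj] at this
        simp at this
        calc (Finset.univ.filter (fun i => v i < m)).card + H.card
            = ((Finset.univ.filter (fun i => v i < m)) ∪ H).card := this.symm
          _ ≤ Finset.univ.card := Finset.card_le_univ _
          _ = 3 * b + 1 := by simp
      omega
    have hcard2 : ((Finset.Iic k).image σ).card = k.val + 1 := by
      rw [Finset.card_image_of_injective _ σ.injective, Fin.card_Iic]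
    have := Finset.card_le_card hsub
    rw [hcard2] at this
    omega
  · by_contra h
    push_neg at h
    have hsub : (Finset.Ici k).image σ ⊆ Finset.univ.filter (fun i => M < v i) := by
      intro i hi
      simp only [Finset.mem_image, Finset.mem_Ici] at hi
      obtain ⟨j, hj, rfl⟩ := hi
      have : (v ∘ σ) k ≤ (v ∘ σ) j := hmono hj
      simp only [Finset.mem_filter, Finset.mem_univ, true_and]
      exact lt_of_lt_of_le h this
    have hdisj : Finset.univ.filter (fun i => M < v i) ∩ H = ∅ := by
      ext i
      simp only [Finset.mem_inter, Finset.mem_filter, Finset.mem_univ, true_and,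
        Finset.notMem_empty, iff_false]
      rintro ⟨hlt, hiH⟩
      exact absurd (Finset.le_sup' v hiH) (not_le.mpr hlt)
    have hcard1 : (Finset.univ.filter (fun i => M < v i)).card ≤ b := by
      have hle : (Finset.univ.filter (fun i => M < v i)).card + H.card ≤ 3 * b + 1 := by
        have := Finset.card_union_add_card_inter
          (Finset.univ.filter (fun i => M < v i)) H
        rw [hdisj] at this
        simp at this
        calc (Finset.univ.filter (fun i => M < v i)).card + H.card
            = ((Finset.univ.filter (fun i => M < v i)) ∪ H).card := this.symm
          _ ≤ Finset.univ.card := Finset.card_le_univ _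
          _ = 3 * b + 1 := by simp
      omega
    have hcard2 : ((Finset.Ici k).image σ).card = 3 * b + 1 - k.val := by
      rw [Finset.card_image_of_injective _ σ.injective, Fin.card_Ici]
    have := Finset.card_le_card hsub
    rw [hcard2] at this
    omega
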